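/- Let Q₁ ∈ ℤ^{k×l} and Q_* ∈ ℤ^{k×(k−l)} with Q₁ᵀQ_* = 0 and both of full column rank, let C = Q₁ᵀQ₁, C_* = Q_*ᵀQ_*, and let N be a positive integer such that N·C⁻¹ ∈ ℤ^{l×l}. Then N·Q_*·C_*⁻¹·Q_*ᵀ is an integer matrix, and each of its diagonal entries lies in {0, 1, …, N}. In particular, for every row r of Q_*, the number N·r·C_*⁻¹·rᵀ is an integer between 0 and N. -/

import Mathlib

open Matrix

private lemma isUnit_det_of_rank_eq {n : ℕ} (M : Matrix (Fin n) (Fin n) ℚ)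
    (h : M.rank = n) : IsUnit M.det := by
  rw [← isUnit_iff_isUnit_det, ← Matrix.mulVec_injective_iff_isUnit]
  have hsurj : Function.Surjective M.mulVecLin := by
    rw [← LinearMap.range_eq_top]
    apply Submodule.eq_top_of_finrank_eq
    rw [show Module.finrank ℚ (LinearMap.range M.mulVecLin) = M.rank from rfl, h,
      Module.finrank_fintype_fun_eq_card, Fintype.card_fin]
  have hinj := (LinearMap.injective_iff_surjective (f := M.mulVecLin)).mpr hsurj
  intro x y hxy
  exact hinj (by simpa [Matrix.mulVecLin_apply] using hxy)

private lemma gram_inv_nonneg {k : ℕ} {n : Type*} [Fintype n] [DecidableEq n]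
    (X : Matrix (Fin k) n ℚ) (h : IsUnit (Xᵀ * X).det) (w : n → ℚ) :
    0 ≤ w ⬝ᵥ ((Xᵀ * X)⁻¹ *ᵥ w) := by
  set y := (Xᵀ * X)⁻¹ *ᵥ w with hy
  have hw : (Xᵀ * X) *ᵥ y = w := by
    rw [hy, mulVec_mulVec, mul_nonsing_inv _ h, one_mulVec]
  have hq : w ⬝ᵥ y = (X *ᵥ y) ⬝ᵥ (X *ᵥ y) := by
    rw [← hw, ← mulVec_mulVec, mulVec_transpose, ← dotProduct_mulVec, dotProduct_comm]
  rw [hq, dotProduct]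
  exact Finset.sum_nonneg fun i _ => mul_self_nonneg _

private lemma diag_eq {k : ℕ} {n : Type*} [Fintype n]
    (X : Matrix (Fin k) n ℚ) (G : Matrix n n ℚ) (i : Fin k) :
    (fun j => X i j) ⬝ᵥ (G *ᵥ fun j => X i j) = (X * G * Xᵀ) i i := by
  simp only [dotProduct, mulVec, Matrix.mul_apply, transpose_apply, dotProduct,
    Finset.mul_sum, Finset.sum_mul]
  rw [Finset.sum_comm]
  exact Finset.sum_congr rfl fun a _ => Finset.sum_congr rfl fun b _ => by ring

private lemma proj_sum_eq_one {k : ℕ} {n₁ n₂ : Type*} [Fintype n₁] [Fintype n₂]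
    [DecidableEq n₁] [DecidableEq n₂] (e : (n₁ ⊕ n₂) ≃ Fin k)
    (A : Matrix (Fin k) n₁ ℚ) (B : Matrix (Fin k) n₂ ℚ)
    (horth : Aᵀ * B = 0)
    (hA : IsUnit (Aᵀ * A).det) (hB : IsUnit (Bᵀ * B).det) :
    A * (Aᵀ * A)⁻¹ * Aᵀ + B * (Bᵀ * B)⁻¹ * Bᵀ = 1 := by
  have horth' : Bᵀ * A = 0 := by
    have := congrArg transpose horth
    simpa [transpose_mul] using this
  set F : Matrix (Fin k) (n₁ ⊕ n₂) ℚ := fromCols A B with hF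
  have hFtF : Fᵀ * F = fromBlocks (Aᵀ * A) 0 0 (Bᵀ * B) := by
    rw [hF, transpose_fromCols, fromRows_mul_fromCols, horth, horth']
  have hinv : (Fᵀ * F)⁻¹ = fromBlocks (Aᵀ * A)⁻¹ 0 0 (Bᵀ * B)⁻¹ := by
    apply inv_eq_right_inv
    rw [hFtF, fromBlocks_multiply]
    simp [mul_nonsing_inv _ hA, mul_nonsing_inv _ hB]
  set M : Matrix (Fin k) (Fin k) ℚ := F.submatrix id e.symm with hM
  have hMt : Mᵀ = Fᵀ.submatrix e.symm id := rfl
  have hMtM : Mᵀ * M = (Fᵀ * F).submatrix e.symm e.symm := by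
    rw [hMt, hM]
    exact submatrix_mul_equiv Fᵀ F _ (Equiv.refl _) _
  have hdet : IsUnit M.det := by
    have h1 : M.det * M.det = (Aᵀ * A).det * (Bᵀ * B).det := by
      have h2 := congrArg det hMtM
      rw [det_mul, det_transpose] at h2
      rwa [det_submatrix_equiv_self, hFtF, det_fromBlocks_zero₂₁] at h2
    exact isUnit_of_mul_isUnit_left (h1 ▸ (hA.mul hB))
  have hdetT : IsUnit Mᵀ.det := by rwa [det_transpose]
  have hMinv : M * (Mᵀ * M)⁻¹ * Mᵀ = 1 := by
    rw [Matrix.mul_inv_rev, ← mul_assoc M M⁻¹, mul_nonsing_inv _ hdet, one_mul,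
      nonsing_inv_mul _ hdetT]
  have hcenter : (Mᵀ * M)⁻¹ = ((Fᵀ * F)⁻¹).submatrix e.symm e.symm := by
    rw [hMtM, inv_submatrix_equiv]
  have hfinal : F * (Fᵀ * F)⁻¹ * Fᵀ = 1 := by
    rw [← hMinv, hcenter, hMt, hM,
      submatrix_mul_equiv F ((Fᵀ * F)⁻¹) id e.symm _,
      submatrix_mul_equiv (F * (Fᵀ * F)⁻¹) Fᵀ id e.symm id, submatrix_id_id]
  rw [hinv, hF, transpose_fromCols, fromCols_mul_fromBlocks,
    fromCols_mul_fromRows] at hfinal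
  simpa [add_mul] using hfinal

theorem stmt_6 (k l : ℕ) (hl : l ≤ k)
    (Q₁ : Matrix (Fin k) (Fin l) ℤ) (Q₂ : Matrix (Fin k) (Fin (k - l)) ℤ)
    (horth : Q₁ᵀ * Q₂ = 0)
    (hr₁ : (Q₁.map (Int.cast : ℤ → ℚ)).rank = l)
    (hr₂ : (Q₂.map (Int.cast : ℤ → ℚ)).rank = k - l)
    (N : ℕ) (hN : 0 < N)
    (hint : ∀ i j, ∃ z : ℤ,
      (N : ℚ) * (((Q₁ᵀ * Q₁).map (Int.cast : ℤ → ℚ))⁻¹ i j) = z) :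
    (∀ i j, ∃ z : ℤ,
      (N : ℚ) * ((Q₂.map (Int.cast : ℤ → ℚ) *
        ((Q₂ᵀ * Q₂).map (Int.cast : ℤ → ℚ))⁻¹ *
        (Q₂.map (Int.cast : ℤ → ℚ))ᵀ) i j) = z) ∧
    ∀ i, ∃ z : ℤ,
      (N : ℚ) * dotProduct (fun j => (Q₂ i j : ℚ))
        (((Q₂ᵀ * Q₂).map (Int.cast : ℤ → ℚ))⁻¹.mulVec fun j => (Q₂ i j : ℚ)) = z ∧
      0 ≤ z ∧ z ≤ N := by
  set c : ℤ → ℚ := Int.cast with hc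
  set A : Matrix (Fin k) (Fin l) ℚ := Q₁.map c with hA
  set B : Matrix (Fin k) (Fin (k - l)) ℚ := Q₂.map c with hB
  have hmapmul : ∀ {m n o : Type} [Fintype n] (M : Matrix m n ℤ) (P : Matrix n o ℤ),
      (M * P).map c = M.map c * P.map c := by
    intro m n o _ M P
    ext i j
    simp only [Matrix.map_apply, Matrix.mul_apply, hc]
    push_cast
    rfl
  have hmapT : ∀ {m n : Type} (M : Matrix m n ℤ), (Mᵀ).map c = (M.map c)ᵀ := by
    intro m n M; rfl
  have hC₁ : (Q₁ᵀ * Q₁).map c = Aᵀ * A := by rw [hmapmul, hmapT, hA]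
  have hC₂ : (Q₂ᵀ * Q₂).map c = Bᵀ * B := by rw [hmapmul, hmapT, hB]
  have horthQ : Aᵀ * B = 0 := by
    rw [hA, hB, ← hmapT, ← hmapmul, horth]
    ext i j; simp [hc]
  have hAdet : IsUnit (Aᵀ * A).det :=
    isUnit_det_of_rank_eq _ (by rw [rank_transpose_mul_self, hA, hr₁])
  have hBdet : IsUnit (Bᵀ * B).det :=
    isUnit_det_of_rank_eq _ (by rw [rank_transpose_mul_self, hB, hr₂])
  have e : (Fin l ⊕ Fin (k - l)) ≃ Fin k :=
    finSumFinEquiv.trans (finCongr (Nat.add_sub_cancel' hl))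
  have key := proj_sum_eq_one e A B horthQ hAdet hBdet
  -- integral matrix D with D = N • (AᵀA)⁻¹
  have hint' : ∀ i j, ∃ z : ℤ, (N : ℚ) * ((Aᵀ * A)⁻¹ i j) = z := by
    rw [← hC₁]; exact hint
  choose D hD using hint'
  have hDmap : (Matrix.of D).map c = (N : ℚ) • (Aᵀ * A)⁻¹ := by
    ext i j
    simp only [Matrix.map_apply, Matrix.smul_apply, smul_eq_mul, hc, of_apply]
    exact (hD i j).symm
  have hNP1 : (N : ℚ) • (A * (Aᵀ * A)⁻¹ * Aᵀ) = (Q₁ * Matrix.of D * Q₁ᵀ).map c := by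
    rw [hmapmul, hmapmul, hmapT, ← hA, hDmap]
    rw [Matrix.mul_smul, Matrix.smul_mul]
  set Z : Matrix (Fin k) (Fin k) ℤ := (N : ℤ) • 1 - Q₁ * Matrix.of D * Q₁ᵀ with hZdef
  have hP2 : B * (Bᵀ * B)⁻¹ * Bᵀ = 1 - A * (Aᵀ * A)⁻¹ * Aᵀ := by
    rw [← key]; abel
  have hZ : (N : ℚ) • (B * (Bᵀ * B)⁻¹ * Bᵀ) = Z.map c := by
    rw [hP2, smul_sub, hNP1, hZdef]
    ext i j
    simp only [Matrix.map_apply, Matrix.sub_apply, Matrix.smul_apply, smul_eq_mul,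
      Matrix.one_apply, hc]
    push_cast
    split <;> simp
  have hZapp : ∀ i j, (N : ℚ) * ((B * (Bᵀ * B)⁻¹ * Bᵀ) i j) = (Z i j : ℚ) := by
    intro i j
    have := congrFun (congrFun hZ i) j
    simpa using this
  constructor
  · intro i j
    exact ⟨Z i j, by rw [hC₂]; exact hZapp i j⟩
  · intro i
    refine ⟨Z i i, ?_, ?_, ?_⟩
    · rw [hC₂, show (fun j => (Q₂ i j : ℚ)) = fun j => B i j from rfl,
        diag_eq B (Bᵀ * B)⁻¹ i]
      exact hZapp i i
    · have h1 : 0 ≤ (B * (Bᵀ * B)⁻¹ * Bᵀ) i i := by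
        rw [← diag_eq B (Bᵀ * B)⁻¹ i]
        exact gram_inv_nonneg B hBdet _
      have h2 : (0 : ℚ) ≤ (Z i i : ℚ) := by
        rw [← hZapp i i]
        positivity
      exact_mod_cast h2
    · have h1 : 0 ≤ (A * (Aᵀ * A)⁻¹ * Aᵀ) i i := by
        rw [← diag_eq A (Aᵀ * A)⁻¹ i]
        exact gram_inv_nonneg A hAdet _
      have h2 : (Z i i : ℚ) ≤ (N : ℚ) := by
        rw [← hZapp i i, hP2]
        have hle : ((1 - A * (Aᵀ * A)⁻¹ * Aᵀ : Matrix (Fin k) (Fin k) ℚ)) i i ≤ 1 := by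
          simp only [Matrix.sub_apply, Matrix.one_apply_eq]
          linarith
        calc (N : ℚ) * ((1 - A * (Aᵀ * A)⁻¹ * Aᵀ : Matrix (Fin k) (Fin k) ℚ)) i i ≤ (N : ℚ) * 1 := by
              apply mul_le_mul_of_nonneg_left hle (by positivity)
          _ = N := mul_one _
      exact_mod_cast h2
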